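/- arXiv:2010.01887 — 4 statements merged into one kernel-verified Lean document; each statement's English description precedes it below -/
import Mathlib

section
/- Let f : ℝ^d → ℝ admit the Fourier representation f(x) = ∫_{ℝ^d} f̂(ω) e^{iω·x} dω with f̂ ∈ L¹(ℝ^d), let p be a probability density on ℝ^d with p(ω) > 0 for a.e. ω with f̂(ω) ≠ 0 and ∫ |f̂(ω)|²/p(ω) dω < ∞, and let ω_1, …, ω_K be i.i.d. with density p. Then for every x ∈ ℝ^d, E_ω[ | f(x) − Re( K^{-1} Σ_{k=1}^K f̂(ω_k) e^{iω_k·x} / p(ω_k) ) |² ] ≤ K^{-1} ∫_{ℝ^d} |f̂(ω)|²/p(ω) dω. -/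
open MeasureTheory ProbabilityTheory

/-- Pointwise generalization error bound for one-hidden-layer random Fourier features:
if `f(x) = ∫ f̂(ω) e^{iω·x} dω` with `f̂ ∈ L¹`, `p` is a probability density positive
a.e. on `{f̂ ≠ 0}` with `∫ |f̂|²/p < ∞`, and `ω 0, …, ω (K-1)` are i.i.d. with density `p`,
then for every `x`,
`E[|f x - Re (K⁻¹ ∑ k, f̂(ω k) e^{i ω k · x} / p (ω k))|²] ≤ K⁻¹ ∫ |f̂|²/p`. -/
theorem random_fourier_features_pointwise_bound
    {Ω : Type*} [MeasurableSpace Ω] (P : Measure Ω) [IsProbabilityMeasure P]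
    (d K : ℕ) (hK : 0 < K)
    (f : (Fin d → ℝ) → ℝ) (fhat : (Fin d → ℝ) → ℂ)
    (hfhatint : Integrable fhat volume)
    (hf : ∀ x : Fin d → ℝ, (f x : ℂ)
      = ∫ y : Fin d → ℝ, fhat y * Complex.exp (Complex.I * ((∑ i, y i * x i : ℝ) : ℂ)))
    (p : (Fin d → ℝ) → ℝ) (hpmeas : Measurable p) (hpnonneg : ∀ x, 0 ≤ p x)
    (hpprob : ∫⁻ x, ENNReal.ofReal (p x) = 1)
    (hpos : ∀ᵐ x ∂(volume : Measure (Fin d → ℝ)), fhat x ≠ 0 → 0 < p x)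
    (hA : Integrable (fun x => ‖fhat x‖ ^ 2 / p x) volume)
    (ω : Fin K → Ω → (Fin d → ℝ)) (hωmeas : ∀ k, Measurable (ω k))
    (hlaw : ∀ k, Measure.map (ω k) P
      = volume.withDensity (fun x => ENNReal.ofReal (p x)))
    (hindep : iIndepFun ω P) :
    ∀ x : Fin d → ℝ,
      ∫ w, (f x - ((∑ k, fhat (ω k w) / (p (ω k w) : ℂ)
            * Complex.exp (Complex.I * ((∑ i, ω k w i * x i : ℝ) : ℂ))) / (K : ℂ)).re) ^ 2 ∂P
        ≤ (∫ y, ‖fhat y‖ ^ 2 / p y) / K := by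
  intro x
  classical
  obtain ⟨fh, fhsm, fheq⟩ := hfhatint.1
  have fhmeas : Measurable fh := fhsm.measurable
  set μ : Measure (Fin d → ℝ) := volume.withDensity (fun y => ENNReal.ofReal (p y)) with hμdef
  have hμac : μ ≪ (volume : Measure (Fin d → ℝ)) := withDensity_absolutelyContinuous _ _
  have hμprob : IsProbabilityMeasure μ := by
    constructor
    rw [hμdef, withDensity_apply _ MeasurableSet.univ, setLIntegral_univ, hpprob]
  set e : (Fin d → ℝ) → ℂ := fun y => Complex.exp (Complex.I * ((∑ i, y i * x i : ℝ) : ℂ))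
    with hedef
  have hemeas : Measurable e := by
    apply Complex.measurable_exp.comp
    exact measurable_const.mul (Complex.measurable_ofReal.comp
      (Finset.measurable_sum _ fun i _ => (measurable_pi_apply i).mul measurable_const))
  have heabs : ∀ y, ‖e y‖ = 1 := by
    intro y
    simp [hedef, Complex.norm_exp, Complex.mul_re]
  set g : (Fin d → ℝ) → ℝ := fun y => (fh y / (p y : ℂ) * e y).re with hgdef
  have hgmeas : Measurable g :=
    Complex.measurable_re.comp ((fhmeas.div (Complex.measurable_ofReal.comp hpmeas)).mul hemeas)
  -- pointwise key facts
  have hkey : ∀ᵐ y ∂(volume : Measure (Fin d → ℝ)),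
      p y * g y = (fhat y * e y).re ∧ p y * g y ^ 2 ≤ ‖fhat y‖ ^ 2 / p y := by
    filter_upwards [fheq, hpos] with y h1 h2
    by_cases h0 : fhat y = 0
    · have hfh0 : fh y = 0 := by rw [← h1, h0]
      constructor
      · simp [hgdef, hfh0, h0]
      · simp [hgdef, hfh0, h0]
    · have hp : 0 < p y := h2 h0
      have hpne : (p y : ℂ) ≠ 0 := by exact_mod_cast hp.ne'
      have hmul : (p y : ℂ) * (fh y / (p y : ℂ) * e y) = fhat y * e y := by
        rw [h1]; field_simp
      constructor
      · calc p y * g y = ((p y : ℂ) * (fh y / (p y : ℂ) * e y)).re := by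
              simp [hgdef, Complex.mul_re]
          _ = (fhat y * e y).re := by rw [hmul]
      · have habs : ‖fh y / (p y : ℂ) * e y‖ = ‖fhat y‖ / p y := by
          rw [norm_mul, norm_div, heabs, Complex.norm_real, Real.norm_eq_abs, abs_of_pos hp, mul_one, h1]
        have hgle : g y ^ 2 ≤ (‖fhat y‖ / p y) ^ 2 := by
          rw [← habs, ← sq_abs (g y)]
          exact pow_le_pow_left₀ (abs_nonneg _) (Complex.abs_re_le_norm _) 2
        calc p y * g y ^ 2 ≤ p y * (‖fhat y‖ / p y) ^ 2 :=
              mul_le_mul_of_nonneg_left hgle hp.le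
          _ = ‖fhat y‖ ^ 2 / p y := by field_simp
  -- integrability / mean over volume
  have hfe_int : Integrable (fun y => fhat y * e y) volume := by
    refine Integrable.mono' hfhatint.norm (hfhatint.1.mul hemeas.aestronglyMeasurable) ?_
    filter_upwards with y
    rw [norm_mul, heabs, mul_one]
  have hre_int : Integrable (fun y => (fhat y * e y).re) volume := hfe_int.re
  have hmean_vol : ∫ y, p y * g y = f x := by
    rw [integral_congr_ae (hkey.mono fun y h => h.1)]
    have h2 : ∫ y, (fhat y * e y).re = (∫ y, fhat y * e y).re := by
      have := Complex.reCLM.integral_comp_comm hfe_int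
      simpa using this
    rw [h2, ← hf x, Complex.ofReal_re]
  -- second moment over volume
  have hpg2_nonneg : ∀ y, 0 ≤ p y * g y ^ 2 := fun y => mul_nonneg (hpnonneg y) (sq_nonneg _)
  have hpg2_int : Integrable (fun y => p y * g y ^ 2) volume := by
    refine Integrable.mono' hA ((hpmeas.mul (hgmeas.pow_const 2)).aestronglyMeasurable) ?_
    filter_upwards [hkey] with y hy
    rw [Real.norm_eq_abs, abs_of_nonneg (hpg2_nonneg y)]
    exact hy.2
  have hsq_vol : ∫ y, p y * g y ^ 2 ≤ ∫ y, ‖fhat y‖ ^ 2 / p y :=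
    integral_mono_ae hpg2_int hA (hkey.mono fun y h => h.2)
  -- transfer volume integrals to μ
  have hμint : ∀ h : (Fin d → ℝ) → ℝ, ∫ y, h y ∂μ = ∫ y, p y * h y := by
    intro h
    rw [hμdef,
      show (fun y => ENNReal.ofReal (p y)) = (fun y => ((p y).toNNReal : ENNReal)) from rfl,
      integral_withDensity_eq_integral_smul hpmeas.real_toNNReal h]
    congr 1; ext y
    simp [NNReal.smul_def, Real.coe_toNNReal _ (hpnonneg y)]
  have hmean_μ : ∫ y, g y ∂μ = f x := by rw [hμint g]; exact hmean_vol
  have hsq_μ_int : Integrable (fun y => g y ^ 2) μ := by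
    rw [hμdef, integrable_withDensity_iff hpmeas.ennreal_ofReal
      (Filter.Eventually.of_forall fun y => ENNReal.ofReal_lt_top)]
    exact hpg2_int.congr (Filter.Eventually.of_forall fun y => by
      simp only [ENNReal.toReal_ofReal (hpnonneg y)]; ring)
  have hsq_μ : ∫ y, g y ^ 2 ∂μ ≤ ∫ y, ‖fhat y‖ ^ 2 / p y := by
    rw [hμint (fun y => g y ^ 2)]; exact hsq_vol
  have hgmem : MemLp g 2 μ :=
    (memLp_two_iff_integrable_sq hgmeas.aestronglyMeasurable).mpr hsq_μ_int
  -- the random variables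
  have hXmem : ∀ k, MemLp (g ∘ ω k) 2 P := by
    intro k
    refine (memLp_map_measure_iff hgmeas.aestronglyMeasurable (hωmeas k).aemeasurable).1 ?_
    rw [hlaw k]; exact hgmem
  have hXint : ∀ k, Integrable (fun w => g (ω k w)) P :=
    fun k => (hXmem k).integrable one_le_two
  have hXmean : ∀ k, ∫ w, g (ω k w) ∂P = f x := by
    intro k
    rw [← hmean_μ, ← hlaw k, integral_map (hωmeas k).aemeasurable hgmeas.aestronglyMeasurable]
  have hXsq : ∀ k, ∫ w, g (ω k w) ^ 2 ∂P = ∫ y, g y ^ 2 ∂μ := by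
    intro k
    rw [← hlaw k, integral_map (hωmeas k).aemeasurable
      ((hgmeas.pow_const 2).aestronglyMeasurable)]
  set B : ℝ := ∫ y, ‖fhat y‖ ^ 2 / p y with hBdef
  have hvark : ∀ k, variance (g ∘ ω k) P ≤ B := by
    intro k
    refine le_trans (variance_le_expectation_sq (hgmeas.comp (hωmeas k)).aestronglyMeasurable) ?_
    have : P[(g ∘ ω k) ^ 2] = ∫ w, g (ω k w) ^ 2 ∂P := by
      apply integral_congr_ae; filter_upwards with w; simp
    rw [this, hXsq k]
    exact hsq_μ
  have hindep' : iIndepFun (fun k => g ∘ ω k) P :=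
    hindep.comp _ (fun _ => hgmeas)
  have hSvar : variance (∑ k, g ∘ ω k) P = ∑ k, variance (g ∘ ω k) P :=
    IndepFun.variance_sum (fun k _ => hXmem k)
      (fun i _ j _ hij => hindep'.indepFun hij)
  have hSmem : MemLp (∑ k, g ∘ ω k) 2 P := memLp_finset_sum' _ (fun k _ => hXmem k)
  set T : Ω → ℝ := fun w => (K : ℝ)⁻¹ * ∑ k, g (ω k w) with hTdef
  have hSapp : ∀ w, (∑ k, g ∘ ω k) w = ∑ k, g (ω k w) := by
    intro w; simp [Finset.sum_apply]
  have hTeq : T = fun w => (K : ℝ)⁻¹ * (∑ k, g ∘ ω k) w := by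
    funext w; rw [hTdef]; simp [hSapp w]
  have hTmem : MemLp T 2 P := by
    rw [hTeq]; exact hSmem.const_mul _
  have hTmean : ∫ w, T w ∂P = f x := by
    rw [hTdef]
    simp only
    rw [integral_const_mul, integral_finset_sum _ (fun k _ => hXint k)]
    rw [Finset.sum_congr rfl fun k _ => hXmean k]
    simp [Finset.sum_const, mul_comm]
    field_simp
  have hTvar : variance T P ≤ B / K := by
    have h1 : variance T P = (K : ℝ)⁻¹ ^ 2 * variance (∑ k, g ∘ ω k) P := by
      rw [hTeq, variance_const_mul]
    rw [h1, hSvar]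
    have h2 : ∑ k : Fin K, variance (g ∘ ω k) P ≤ K * B := by
      calc ∑ k : Fin K, variance (g ∘ ω k) P ≤ ∑ _k : Fin K, B :=
            Finset.sum_le_sum fun k _ => hvark k
        _ = K * B := by simp [Finset.sum_const, mul_comm]
    have hKpos : (0 : ℝ) < K := by exact_mod_cast hK
    calc (K : ℝ)⁻¹ ^ 2 * ∑ k : Fin K, variance (g ∘ ω k) P
        ≤ (K : ℝ)⁻¹ ^ 2 * (K * B) := by
          apply mul_le_mul_of_nonneg_left h2 (by positivity)
      _ = B / K := by field_simp
  have hfinal : ∫ w, (T w - f x) ^ 2 ∂P = variance T P := by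
    rw [variance_eq_integral hTmem.aemeasurable]
    apply integral_congr_ae
    filter_upwards with w
    simp [hTmean]
  -- identify the integrand a.e.
  have hae_fh : ∀ᵐ w ∂P, ∀ k, fhat (ω k w) = fh (ω k w) := by
    rw [ae_all_iff]
    intro k
    refine ae_of_ae_map (p := fun y => fhat y = fh y) (hωmeas k).aemeasurable ?_
    rw [hlaw k]
    exact fheq.filter_mono hμac.ae_le
  have hcongr : ∀ᵐ w ∂P,
      (f x - ((∑ k, fhat (ω k w) / (p (ω k w) : ℂ)
          * Complex.exp (Complex.I * ((∑ i, ω k w i * x i : ℝ) : ℂ))) / (K : ℂ)).re) ^ 2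
        = (T w - f x) ^ 2 := by
    filter_upwards [hae_fh] with w hw
    have hsum : (∑ k, fhat (ω k w) / (p (ω k w) : ℂ)
          * Complex.exp (Complex.I * ((∑ i, ω k w i * x i : ℝ) : ℂ)))
        = ∑ k, fh (ω k w) / (p (ω k w) : ℂ) * e (ω k w) := by
      refine Finset.sum_congr rfl fun k _ => ?_
      rw [hw k]
    have hre : ((∑ k, fhat (ω k w) / (p (ω k w) : ℂ)
          * Complex.exp (Complex.I * ((∑ i, ω k w i * x i : ℝ) : ℂ))) / (K : ℂ)).re
        = T w := by
      rw [hsum, show ((K : ℂ)) = ((K : ℝ) : ℂ) by push_cast; ring, Complex.div_ofReal_re,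
        Complex.re_sum]
      rw [hTdef]
      simp only [hgdef]
      rw [div_eq_inv_mul]
    rw [hre]
    ring
  calc ∫ w, (f x - ((∑ k, fhat (ω k w) / (p (ω k w) : ℂ)
          * Complex.exp (Complex.I * ((∑ i, ω k w i * x i : ℝ) : ℂ))) / (K : ℂ)).re) ^ 2 ∂P
      = ∫ w, (T w - f x) ^ 2 ∂P := integral_congr_ae hcongr
    _ = variance T P := hfinal
    _ ≤ B / K := hTvar
end

section
/- Let f : ℝ^d → ℝ admit the Fourier representation f(x) = ∫_{ℝ^d} f̂(ω) e^{iω·x} dω with f̂ ∈ L¹(ℝ^d), let p be a probability density on ℝ^d with p(ω) > 0 for a.e. ω with f̂(ω) ≠ 0 and ∫ |f̂(ω)|²/p(ω) dω < ∞, let μ be a probability measure on ℝ^d, and let ω_1, …, ω_K be i.i.d. with density p. Then the expected generalization error of the best random Fourier feature network with these frequencies satisfies E_ω[ inf_{c ∈ ℂ^K} ∫_{ℝ^d} | f(x) − Re Σ_{k=1}^K c_k e^{iω_k·x} |² dμ(x) ] ≤ K^{-1} ∫_{ℝ^d} |f̂(ω)|²/p(ω) dω. -/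
open MeasureTheory ProbabilityTheory

open scoped NNReal ENNReal

lemma rff_integrable_mul {Ω : Type*} [MeasurableSpace Ω] {P : Measure Ω}
    {f g : Ω → ℝ} (hf : MemLp f 2 P) (hg : MemLp g 2 P) :
    Integrable (fun w => f w * g w) P := by
  refine Integrable.mono ((hf.integrable_sq.add hg.integrable_sq).div_const 2)
    (hf.aestronglyMeasurable.mul hg.aestronglyMeasurable) ?_
  filter_upwards with w
  simp only [Pi.add_apply, Real.norm_eq_abs]
  have h1 : 0 ≤ (f w ^ 2 + g w ^ 2) / 2 := by positivity
  rw [abs_of_nonneg h1, abs_mul]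
  nlinarith [sq_nonneg (|f w| - |g w|), sq_abs (f w), sq_abs (g w)]

lemma rff_variance_bound {Ω : Type*} [MeasurableSpace Ω] (P : Measure Ω)
    [IsProbabilityMeasure P] {K : ℕ} (hK : 0 < K) (Z : Fin K → Ω → ℝ)
    (hmem : ∀ k, MemLp (Z k) 2 P) (hzero : ∀ k, ∫ w, Z k w ∂P = 0)
    (hindep : ∀ j k, j ≠ k → IndepFun (Z j) (Z k) P)
    {A : ℝ} (hvar : ∀ k, ∫ w, (Z k w) ^ 2 ∂P ≤ A) :
    ∫ w, ((K : ℝ)⁻¹ * ∑ k, Z k w) ^ 2 ∂P ≤ A / K := by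
  have hKne : (K : ℝ) ≠ 0 := Nat.cast_ne_zero.2 hK.ne'
  have hmul : ∀ j k : Fin K, Integrable (fun w => Z j w * Z k w) P :=
    fun j k => rff_integrable_mul (hmem j) (hmem k)
  have hexp : ∀ w, ((K : ℝ)⁻¹ * ∑ k, Z k w) ^ 2
      = (K : ℝ)⁻¹ ^ 2 * ∑ j, ∑ k, Z j w * Z k w := by
    intro w
    rw [mul_pow, pow_two (∑ k, Z k w), Finset.sum_mul_sum]
  have hint : ∫ w, (∑ j, ∑ k, Z j w * Z k w) ∂P = ∑ j, ∑ k, ∫ w, Z j w * Z k w ∂P := by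
    rw [integral_finset_sum _ (fun j _ => integrable_finset_sum _ (fun k _ => hmul j k))]
    exact Finset.sum_congr rfl fun j _ => integral_finset_sum _ (fun k _ => hmul j k)
  have hoff : ∀ j k : Fin K, j ≠ k → ∫ w, Z j w * Z k w ∂P = 0 := by
    intro j k hjk
    have := (hindep j k hjk).integral_mul_eq_mul_integral (hmem j).aestronglyMeasurable
      (hmem k).aestronglyMeasurable
    simpa [Pi.mul_apply, hzero j, hzero k] using this
  have hsum : ∑ j, ∑ k, ∫ w, Z j w * Z k w ∂P ≤ K * A := by
    have : ∀ j : Fin K, ∑ k, ∫ w, Z j w * Z k w ∂P ≤ A := by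
      intro j
      rw [Finset.sum_eq_single j]
      · simpa [pow_two] using hvar j
      · exact fun k _ hkj => hoff j k (Ne.symm hkj)
      · simp
    calc ∑ j, ∑ k, ∫ w, Z j w * Z k w ∂P ≤ ∑ _j : Fin K, A :=
          Finset.sum_le_sum fun j _ => this j
      _ = K * A := by simp [Finset.sum_const, mul_comm]
  calc ∫ w, ((K : ℝ)⁻¹ * ∑ k, Z k w) ^ 2 ∂P
      = (K : ℝ)⁻¹ ^ 2 * ∫ w, (∑ j, ∑ k, Z j w * Z k w) ∂P := by
        simp_rw [hexp]; rw [integral_const_mul]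
    _ ≤ (K : ℝ)⁻¹ ^ 2 * (K * A) := by
        rw [hint] at *
        exact mul_le_mul_of_nonneg_left hsum (by positivity)
    _ = A / K := by field_simp

set_option maxHeartbeats 1000000 in
/-- Expected generalization error bound for the best one-hidden-layer random Fourier
feature network: if `f(x) = ∫ f̂(ω) e^{iω·x} dω` with `f̂ ∈ L¹`, `p` is a probability
density positive a.e. on `{f̂ ≠ 0}` with `∫ |f̂|²/p < ∞`, `μ` is a probability measure
(the data distribution), and `ω 0, …, ω (K-1)` are i.i.d. with density `p`, then
`E_ω[inf_{c ∈ ℂ^K} ∫ |f x - Re ∑ k, c k e^{i ω k · x}|² dμ(x)] ≤ K⁻¹ ∫ |f̂|²/p`. -/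
theorem random_fourier_features_generalization_bound
    {Ω : Type*} [MeasurableSpace Ω] (P : Measure Ω) [IsProbabilityMeasure P]
    (d K : ℕ) (hK : 0 < K)
    (μ : Measure (Fin d → ℝ)) [IsProbabilityMeasure μ]
    (f : (Fin d → ℝ) → ℝ) (fhat : (Fin d → ℝ) → ℂ)
    (hfhatint : Integrable fhat volume)
    (hf : ∀ x : Fin d → ℝ, (f x : ℂ)
      = ∫ y : Fin d → ℝ, fhat y * Complex.exp (Complex.I * ((∑ i, y i * x i : ℝ) : ℂ)))
    (p : (Fin d → ℝ) → ℝ) (hpmeas : Measurable p) (hpnonneg : ∀ x, 0 ≤ p x)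
    (hpprob : ∫⁻ x, ENNReal.ofReal (p x) = 1)
    (hpos : ∀ᵐ x ∂(volume : Measure (Fin d → ℝ)), fhat x ≠ 0 → 0 < p x)
    (hA : Integrable (fun x => ‖fhat x‖ ^ 2 / p x) volume)
    (ω : Fin K → Ω → (Fin d → ℝ)) (hωmeas : ∀ k, Measurable (ω k))
    (hlaw : ∀ k, Measure.map (ω k) P
      = volume.withDensity (fun x => ENNReal.ofReal (p x)))
    (hindep : iIndepFun ω P) :
    ∫ w, (⨅ c : Fin K → ℂ,
        ∫ x, (f x - (∑ k, c k
          * Complex.exp (Complex.I * ((∑ i, ω k w i * x i : ℝ) : ℂ))).re) ^ 2 ∂μ) ∂P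
      ≤ (∫ y, ‖fhat y‖ ^ 2 / p y) / K := by
  classical
  have hKne : (K : ℝ) ≠ 0 := Nat.cast_ne_zero.2 hK.ne'
  obtain ⟨fh, fhsm, fheq⟩ := hfhatint.aestronglyMeasurable
  have fhmeas : Measurable fh := fhsm.measurable
  set A : ℝ := ∫ y, ‖fhat y‖ ^ 2 / p y with hAdef
  have hA0 : 0 ≤ A :=
    integral_nonneg fun y => div_nonneg (by positivity) (hpnonneg y)
  set ν : Measure (Fin d → ℝ) := volume.withDensity (fun y => ENNReal.ofReal (p y))
    with hνdef
  haveI hνprob : IsProbabilityMeasure ν := by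
    constructor
    rw [hνdef, withDensity_apply _ MeasurableSet.univ, setLIntegral_univ]
    exact hpprob
  set g : (Fin d → ℝ) → ℂ := fun y => fh y / (p y : ℂ) with hgdef
  have hgmeas : Measurable g := fhmeas.div (Complex.measurable_ofReal.comp hpmeas)
  set e : (Fin d → ℝ) → (Fin d → ℝ) → ℂ :=
    fun y x => Complex.exp (Complex.I * ((∑ i, y i * x i : ℝ) : ℂ)) with hedef
  have hecont : Continuous (fun q : (Fin d → ℝ) × (Fin d → ℝ) => e q.1 q.2) := by
    rw [hedef]
    apply Complex.continuous_exp.comp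
    apply continuous_const.mul
    apply Complex.continuous_ofReal.comp
    exact continuous_finset_sum _ fun i _ =>
      ((continuous_apply i).comp continuous_fst).mul
        ((continuous_apply i).comp continuous_snd)
  have he1 : ∀ y x, ‖e y x‖ = 1 := by
    intro y x
    rw [hedef, Complex.norm_exp]
    simp
  set φ : (Fin d → ℝ) → (Fin d → ℝ) → ℝ := fun x y => (g y * e y x).re with hφdef
  clear_value A ν g e φ
  have hφmeas : ∀ x, Measurable (φ x) := by
    intro x
    rw [hφdef]
    exact Complex.measurable_re.comp (hgmeas.mul
      ((hecont.comp (continuous_id.prodMk continuous_const)).measurable))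
  have hnetint : ∀ x, Integrable (fun y => fhat y * e y x) volume := by
    intro x
    refine hfhatint.norm.mono' (hfhatint.aestronglyMeasurable.mul
      ((hecont.comp (continuous_id.prodMk continuous_const)).aestronglyMeasurable)) ?_
    filter_upwards with y
    rw [norm_mul]
    simp [he1]
  have hf' : ∀ x, f x = (∫ y, fhat y * e y x).re := by
    intro x
    have h := congrArg Complex.re (hf x)
    simpa [hedef] using h
  have haekey : ∀ᵐ y : (Fin d → ℝ), fhat y = fh y ∧ (fhat y ≠ 0 → 0 < p y) :=
    fheq.and hpos
  have haeg : ∀ᵐ y : (Fin d → ℝ), (p y : ℂ) * g y = fhat y := by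
    filter_upwards [haekey] with y hy
    rcases (hpnonneg y).eq_or_lt with h0 | h0
    · have hf0 : fhat y = 0 := by
        by_contra hne
        exact absurd (hy.2 hne) (by rw [← h0]; exact lt_irrefl 0)
      have hp0 : (p y : ℂ) = 0 := by rw [← h0]; norm_num
      rw [hp0, zero_mul, hf0]
    · have hne : (p y : ℂ) ≠ 0 := by
        exact_mod_cast h0.ne'
      rw [hgdef]
      rw [mul_comm, div_mul_cancel₀ _ hne, ← hy.1]
  have haebound : ∀ᵐ y : (Fin d → ℝ), ∀ x,
      p y * (φ x y) ^ 2 ≤ ‖fhat y‖ ^ 2 / p y := by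
    filter_upwards [haekey] with y hy
    intro x
    rcases (hpnonneg y).eq_or_lt with h0 | h0
    · rw [← h0, zero_mul]
      exact div_nonneg (by positivity) le_rfl
    · have hre : (φ x y) ^ 2 ≤ ‖g y * e y x‖ ^ 2 := by
        rw [hφdef]
        have h := Complex.abs_re_le_norm (g y * e y x)
        nlinarith [norm_nonneg (g y * e y x), neg_abs_le (g y * e y x).re,
          le_abs_self (g y * e y x).re]
      have habs : ‖g y * e y x‖ = ‖fhat y‖ / p y := by
        rw [norm_mul, he1, mul_one, hgdef, norm_div, Complex.norm_real,
          Real.norm_of_nonneg (hpnonneg y), hy.1]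
      calc p y * φ x y ^ 2 ≤ p y * (‖fhat y‖ / p y) ^ 2 := by
            rw [← habs]
            exact mul_le_mul_of_nonneg_left hre (hpnonneg y)
        _ = ‖fhat y‖ ^ 2 / p y := by
            field_simp
  have hwd : ∀ F : (Fin d → ℝ) → ℝ, ∫ y, F y ∂ν = ∫ y, p y * F y := by
    intro F
    rw [hνdef]
    have h1 : (fun y => ENNReal.ofReal (p y)) = fun y => (((p y).toNNReal : ℝ≥0) : ℝ≥0∞) :=
      rfl
    rw [h1, integral_withDensity_eq_integral_smul hpmeas.real_toNNReal]
    congr 1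
    funext y
    simp [NNReal.smul_def, Real.coe_toNNReal _ (hpnonneg y)]
  have m1 : ∀ x, ∫ y, φ x y ∂ν = f x := by
    intro x
    rw [hwd]
    have hcong : ∫ y, p y * φ x y = ∫ y, (fhat y * e y x).re := by
      refine integral_congr_ae ?_
      filter_upwards [haeg] with y hy
      rw [hφdef]
      rw [← Complex.re_ofReal_mul, ← mul_assoc, hy]
    rw [hcong]
    have h2 : ∫ y, (fhat y * e y x).re = (∫ y, fhat y * e y x).re := by
      simpa using integral_re (hnetint x)
    rw [h2, ← hf' x]
  have hsq_int : ∀ x, Integrable (fun y => p y * (φ x y) ^ 2) volume := by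
    intro x
    refine hA.mono' ((hpmeas.mul ((hφmeas x).pow_const 2)).aestronglyMeasurable) ?_
    filter_upwards [haebound] with y hy
    rw [Real.norm_eq_abs, abs_of_nonneg (mul_nonneg (hpnonneg y) (sq_nonneg _))]
    exact hy x
  have m2 : ∀ x, ∫ y, (φ x y) ^ 2 ∂ν ≤ A := by
    intro x
    rw [hwd, hAdef]
    refine integral_mono_of_nonneg ?_ hA ?_
    · filter_upwards with y
      exact mul_nonneg (hpnonneg y) (sq_nonneg _)
    · filter_upwards [haebound] with y hy
      exact hy x
  have hφmem : ∀ x, MemLp (φ x) 2 ν := by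
    intro x
    refine (memLp_two_iff_integrable_sq ((hφmeas x).aestronglyMeasurable)).2 ?_
    rw [hνdef]
    have h1 : (fun y => ENNReal.ofReal (p y)) = fun y => (((p y).toNNReal : ℝ≥0) : ℝ≥0∞) :=
      rfl
    rw [h1, integrable_withDensity_iff_integrable_smul hpmeas.real_toNNReal]
    have h2 : (fun y => (p y).toNNReal • ((φ x y) ^ 2)) = fun y => p y * (φ x y) ^ 2 := by
      funext y
      simp [NNReal.smul_def, Real.coe_toNNReal _ (hpnonneg y)]
    rw [h2]
    exact hsq_int x
  -- moments over P
  have hXmem : ∀ x k, MemLp (fun w => φ x (ω k w)) 2 P := by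
    intro x k
    have h1 : MemLp (φ x) 2 (Measure.map (ω k) P) := by rw [hlaw k]; exact hφmem x
    exact (memLp_map_measure_iff ((hφmeas x).aestronglyMeasurable)
      (hωmeas k).aemeasurable).1 h1
  have hXmean : ∀ x k, ∫ w, φ x (ω k w) ∂P = f x := by
    intro x k
    rw [← m1 x, ← hlaw k]
    exact (integral_map (hωmeas k).aemeasurable ((hφmeas x).aestronglyMeasurable)).symm
  have hXsq : ∀ x k, ∫ w, (φ x (ω k w)) ^ 2 ∂P = ∫ y, (φ x y) ^ 2 ∂ν := by
    intro x k
    rw [← hlaw k]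
    exact (integral_map (hωmeas k).aemeasurable
      (((hφmeas x).pow_const 2).aestronglyMeasurable)).symm
  have core : ∀ x, ∫ w, (f x - (K : ℝ)⁻¹ * ∑ k, φ x (ω k w)) ^ 2 ∂P ≤ A / K := by
    intro x
    set Z : Fin K → Ω → ℝ := fun k w => φ x (ω k w) - f x with hZdef
    clear_value Z
    have hZmem : ∀ k, MemLp (Z k) 2 P := by
      intro k
      rw [hZdef]
      exact (hXmem x k).sub (memLp_const _)
    have hZzero : ∀ k, ∫ w, Z k w ∂P = 0 := by
      intro k
      rw [hZdef]
      rw [integral_sub ((hXmem x k).integrable one_le_two) (integrable_const _)]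
      simp [hXmean x k]
    have hZindep : ∀ j k, j ≠ k → IndepFun (Z j) (Z k) P := by
      intro j k hjk
      rw [hZdef]
      exact (hindep.indepFun hjk).comp ((hφmeas x).sub_const _) ((hφmeas x).sub_const _)
    have hZvar : ∀ k, ∫ w, (Z k w) ^ 2 ∂P ≤ A := by
      intro k
      have hXint : Integrable (fun w => φ x (ω k w)) P := (hXmem x k).integrable one_le_two
      have hX2int : Integrable (fun w => (φ x (ω k w)) ^ 2) P := (hXmem x k).integrable_sq
      have hexp : ∀ w, (Z k w) ^ 2
          = (φ x (ω k w)) ^ 2 - (2 * f x) * φ x (ω k w) + (f x) ^ 2 := by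
        intro w
        rw [hZdef]
        ring
      have hsubint : Integrable
          (fun w => (φ x (ω k w)) ^ 2 - (2 * f x) * φ x (ω k w)) P :=
        hX2int.sub (hXint.const_mul _)
      have hval : ∫ w, (Z k w) ^ 2 ∂P = ∫ y, (φ x y) ^ 2 ∂ν - (f x) ^ 2 := by
        simp_rw [hexp]
        rw [integral_add hsubint (integrable_const _),
          integral_sub hX2int (hXint.const_mul _), integral_const_mul, hXmean x k,
          hXsq x k, integral_const]
        simp
        ring
      rw [hval]
      have := m2 x
      nlinarith [sq_nonneg (f x)]
    have hfin := rff_variance_bound P hK Z hZmem hZzero hZindep hZvar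
    have heq : ∀ w, (f x - (K : ℝ)⁻¹ * ∑ k, φ x (ω k w)) ^ 2
        = ((K : ℝ)⁻¹ * ∑ k, Z k w) ^ 2 := by
      intro w
      rw [hZdef]
      rw [Finset.sum_sub_distrib, Finset.sum_const, Finset.card_univ, Fintype.card_fin,
        nsmul_eq_mul]
      field_simp
      ring
    simp_rw [heq]
    exact hfin
  have coreInt : ∀ x,
      Integrable (fun w => (f x - (K : ℝ)⁻¹ * ∑ k, φ x (ω k w)) ^ 2) P := by
    intro x
    have hmem : MemLp (fun w => f x - (K : ℝ)⁻¹ * ∑ k, φ x (ω k w)) 2 P := by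
      have h1 : MemLp (fun w => ∑ k, φ x (ω k w)) 2 P :=
        memLp_finset_sum Finset.univ (fun k _ => hXmem x k)
      exact (memLp_const (f x)).sub (h1.const_mul _)
    exact hmem.integrable_sq
  have hfcont : Continuous f := by
    have hFc : Continuous fun x => ∫ y, fhat y * e y x := by
      refine continuous_of_dominated (fun x => (hnetint x).aestronglyMeasurable) ?_
        hfhatint.norm ?_
      · intro x
        filter_upwards with y
        rw [norm_mul]
        simp [he1]
      · filter_upwards with y
        exact continuous_const.mul
          (hecont.comp (continuous_const.prodMk continuous_id))
    have hfeq : f = fun x => (∫ y, fhat y * e y x).re := funext hf'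
    rw [hfeq]
    exact Complex.continuous_re.comp hFc
  have hJmeas : Measurable (fun q : Ω × (Fin d → ℝ) =>
      (f q.2 - (K : ℝ)⁻¹ * ∑ k, φ q.2 (ω k q.1)) ^ 2) := by
    refine Measurable.pow_const ?_ 2
    refine (hfcont.measurable.comp measurable_snd).sub ?_
    refine Measurable.const_mul ?_ _
    refine Finset.measurable_sum _ fun k _ => ?_
    rw [hφdef]
    exact Complex.measurable_re.comp ((hgmeas.comp ((hωmeas k).comp measurable_fst)).mul
      (hecont.measurable.comp
        (((hωmeas k).comp measurable_fst).prodMk measurable_snd)))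
  have hlin : ∀ x, ∫⁻ w, ENNReal.ofReal ((f x - (K : ℝ)⁻¹ * ∑ k, φ x (ω k w)) ^ 2) ∂P
      ≤ ENNReal.ofReal (A / K) := by
    intro x
    rw [← ofReal_integral_eq_lintegral_ofReal (coreInt x)
      (Filter.Eventually.of_forall fun w => sq_nonneg _)]
    exact ENNReal.ofReal_le_ofReal (core x)
  have hprodint : Integrable (Function.uncurry fun w x =>
      (f x - (K : ℝ)⁻¹ * ∑ k, φ x (ω k w)) ^ 2) (P.prod μ) := by
    constructor
    · exact hJmeas.aestronglyMeasurable
    · have hnn : 0 ≤ᵐ[P.prod μ] (Function.uncurry fun w x =>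
          (f x - (K : ℝ)⁻¹ * ∑ k, φ x (ω k w)) ^ 2) :=
        Filter.Eventually.of_forall fun q => sq_nonneg _
      rw [hasFiniteIntegral_iff_ofReal hnn]
      have hmeas2 : AEMeasurable (fun q : Ω × (Fin d → ℝ) =>
          ENNReal.ofReal ((f q.2 - (K : ℝ)⁻¹ * ∑ k, φ q.2 (ω k q.1)) ^ 2)) (P.prod μ) :=
        hJmeas.ennreal_ofReal.aemeasurable
      calc ∫⁻ q, ENNReal.ofReal
            ((f q.2 - (K : ℝ)⁻¹ * ∑ k, φ q.2 (ω k q.1)) ^ 2) ∂(P.prod μ)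
          = ∫⁻ w, ∫⁻ x, ENNReal.ofReal
              ((f x - (K : ℝ)⁻¹ * ∑ k, φ x (ω k w)) ^ 2) ∂μ ∂P :=
            lintegral_prod _ hmeas2
        _ = ∫⁻ x, ∫⁻ w, ENNReal.ofReal
              ((f x - (K : ℝ)⁻¹ * ∑ k, φ x (ω k w)) ^ 2) ∂P ∂μ :=
            lintegral_lintegral_swap hmeas2
        _ ≤ ∫⁻ _x, ENNReal.ofReal (A / K) ∂μ := lintegral_mono' le_rfl hlin
        _ = ENNReal.ofReal (A / K) := by simp
        _ < ⊤ := ENNReal.ofReal_lt_top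
  have hGint : Integrable (fun w => ∫ x,
      (f x - (K : ℝ)⁻¹ * ∑ k, φ x (ω k w)) ^ 2 ∂μ) P := by
    have h := hprodint.integral_prod_left
    simpa [Function.uncurry] using h
  have hswapint : Integrable (fun x => ∫ w,
      (f x - (K : ℝ)⁻¹ * ∑ k, φ x (ω k w)) ^ 2 ∂P) μ := by
    have h := hprodint.swap.integral_prod_left
    simpa [Function.uncurry, Function.comp] using h
  have hle : ∀ w, (⨅ c : Fin K → ℂ,
      ∫ x, (f x - (∑ k, c k
        * Complex.exp (Complex.I * ((∑ i, ω k w i * x i : ℝ) : ℂ))).re) ^ 2 ∂μ)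
      ≤ ∫ x, (f x - (K : ℝ)⁻¹ * ∑ k, φ x (ω k w)) ^ 2 ∂μ := by
    intro w
    have hbdd : BddBelow (Set.range fun c : Fin K → ℂ =>
        ∫ x, (f x - (∑ k, c k
          * Complex.exp (Complex.I * ((∑ i, ω k w i * x i : ℝ) : ℂ))).re) ^ 2 ∂μ) := by
      refine ⟨0, ?_⟩
      rintro - ⟨c, rfl⟩
      exact integral_nonneg fun x => sq_nonneg _
    refine le_trans (ciInf_le hbdd fun k => (((K : ℝ)⁻¹ : ℝ) : ℂ) * g (ω k w)) (le_of_eq ?_)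
    refine integral_congr_ae (Filter.Eventually.of_forall fun x => ?_)
    have hsum : (∑ k, ((((K : ℝ)⁻¹ : ℝ) : ℂ) * g (ω k w))
        * Complex.exp (Complex.I * ((∑ i, ω k w i * x i : ℝ) : ℂ))).re
        = (K : ℝ)⁻¹ * ∑ k, φ x (ω k w) := by
      rw [Complex.re_sum, Finset.mul_sum]
      refine Finset.sum_congr rfl fun k _ => ?_
      rw [mul_assoc, Complex.re_ofReal_mul, hφdef, hedef]
    simp only [hsum]
  have h0ae : 0 ≤ᵐ[P] fun w => (⨅ c : Fin K → ℂ,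
      ∫ x, (f x - (∑ k, c k
        * Complex.exp (Complex.I * ((∑ i, ω k w i * x i : ℝ) : ℂ))).re) ^ 2 ∂μ) := by
    filter_upwards with w
    exact Real.iInf_nonneg fun c => integral_nonneg fun x => sq_nonneg _
  calc ∫ w, (⨅ c : Fin K → ℂ,
        ∫ x, (f x - (∑ k, c k
          * Complex.exp (Complex.I * ((∑ i, ω k w i * x i : ℝ) : ℂ))).re) ^ 2 ∂μ) ∂P
      ≤ ∫ w, ∫ x, (f x - (K : ℝ)⁻¹ * ∑ k, φ x (ω k w)) ^ 2 ∂μ ∂P :=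
        integral_mono_of_nonneg h0ae hGint (Filter.Eventually.of_forall hle)
    _ = ∫ x, ∫ w, (f x - (K : ℝ)⁻¹ * ∑ k, φ x (ω k w)) ^ 2 ∂P ∂μ :=
        integral_integral_swap hprodint
    _ ≤ ∫ _x, A / K ∂μ := integral_mono hswapint (integrable_const _) fun x => core x
    _ = A / K := by simp
end

section
/- Let f : ℝ^d → ℝ admit the Fourier representation f(x) = ∫_{ℝ^d} f̂(ω) e^{iω·x} dω with f̂ ∈ L¹(ℝ^d) and ‖f̂‖_{L¹} > 0, and let μ be a probability measure on ℝ^d. Then for every K ≥ 1 there exist frequencies ω_1, …, ω_K ∈ ℝ^d and amplitudes c_1, …, c_K ∈ ℂ such that ∫_{ℝ^d} | f(x) − Re Σ_{k=1}^K c_k e^{iω_k·x} |² dμ(x) ≤ ‖f̂‖²_{L¹(ℝ^d)} / K. -/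
open MeasureTheory

lemma aux_pi_integrable {α : Type*} [MeasurableSpace α] (P : Measure α) [SigmaFinite P]
    {K : ℕ} (v : Fin K → α → ℝ) (hv : ∀ i, Integrable (v i) P) :
    Integrable (fun ω : Fin K → α => ∏ i, v i (ω i)) (Measure.pi fun _ => P) := by
  letI : MeasureSpace α := ⟨P⟩
  exact Integrable.fintype_prod (f := v) hv

lemma aux_pi_integral {α : Type*} [MeasurableSpace α] (P : Measure α) [SigmaFinite P]
    {K : ℕ} (v : Fin K → α → ℝ) :
    ∫ ω : Fin K → α, ∏ i, v i (ω i) ∂(Measure.pi fun _ => P) = ∏ i, ∫ a, v i a ∂P := by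
  letI : MeasureSpace α := ⟨P⟩
  exact integral_fintype_prod_eq_prod v

lemma aux_pi_sum_sq {α : Type*} [MeasurableSpace α] (P : Measure α) [IsProbabilityMeasure P]
    {K : ℕ} (u : α → ℝ) (hu : Integrable u P) (hu2 : Integrable (fun a => u a ^ 2) P)
    (hmean : ∫ a, u a ∂P = 0) :
    ∫ ω : Fin K → α, (∑ k, u (ω k)) ^ 2 ∂(Measure.pi fun _ => P)
      = K * ∫ a, u a ^ 2 ∂P := by
  classical
  set Q := (Measure.pi fun _ : Fin K => P) with hQ
  set v : Fin K → Fin K → Fin K → α → ℝ :=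
    fun k j i a => (if i = k then u a else 1) * (if i = j then u a else 1) with hv
  have hvint : ∀ k j i, Integrable (v k j i) P := by
    intro k j i
    simp only [hv]
    by_cases h1 : i = k
    · by_cases h2 : i = j
      · simp only [if_pos h1, if_pos h2]
        simpa only [pow_two] using hu2
      · simp only [if_pos h1, if_neg h2, mul_one]; exact hu
    · by_cases h2 : i = j
      · simp only [if_neg h1, if_pos h2, one_mul]; exact hu
      · simp only [if_neg h1, if_neg h2, mul_one]; exact integrable_const 1
  have hrw : ∀ k j, ∀ ω : Fin K → α, u (ω k) * u (ω j) = ∏ i, v k j i (ω i) := by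
    intro k j ω
    simp only [hv]
    rw [Finset.prod_mul_distrib]
    congr 1 <;> simp
  have hprodint : ∀ k j, Integrable (fun ω : Fin K → α => u (ω k) * u (ω j)) Q := by
    intro k j
    exact (aux_pi_integrable P (v k j) (hvint k j)).congr
      (Filter.Eventually.of_forall fun ω => (hrw k j ω).symm)
  have key : ∀ k j, ∫ ω : Fin K → α, u (ω k) * u (ω j) ∂Q
      = if k = j then ∫ a, u a ^ 2 ∂P else 0 := by
    intro k j
    have h1 : ∫ ω : Fin K → α, u (ω k) * u (ω j) ∂Q = ∏ i, ∫ a, v k j i a ∂P := by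
      rw [show (fun ω : Fin K → α => u (ω k) * u (ω j))
          = fun ω => ∏ i, v k j i (ω i) from funext (hrw k j)]
      exact aux_pi_integral P (v k j)
    rw [h1]
    by_cases hkj : k = j
    · subst hkj
      simp only [if_true]
      have h2 : ∀ i : Fin K, ∫ a, v k k i a ∂P = if i = k then ∫ a, u a ^ 2 ∂P else 1 := by
        intro i
        by_cases h : i = k
        · simp only [hv, h, if_true, eq_self_iff_true, ← pow_two]
        · simp [hv, h]
      rw [Finset.prod_congr rfl fun i _ => h2 i]
      simp
    · simp only [hkj, if_false]
      refine Finset.prod_eq_zero (Finset.mem_univ k) ?_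
      simp only [hv, if_pos rfl, if_neg hkj, mul_one]
      exact hmean
  have expand : ∀ ω : Fin K → α, (∑ k, u (ω k)) ^ 2 = ∑ k, ∑ j, u (ω k) * u (ω j) := by
    intro ω; rw [pow_two, Finset.sum_mul_sum]
  calc ∫ ω : Fin K → α, (∑ k, u (ω k)) ^ 2 ∂Q
      = ∫ ω : Fin K → α, ∑ k, ∑ j, u (ω k) * u (ω j) ∂Q := by
        simp_rw [expand]
    _ = ∑ k : Fin K, ∫ ω : Fin K → α, ∑ j, u (ω k) * u (ω j) ∂Q :=
        integral_finset_sum _ fun k _ => integrable_finset_sum _ fun j _ => hprodint k j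
    _ = ∑ k : Fin K, ∑ j : Fin K, ∫ ω : Fin K → α, u (ω k) * u (ω j) ∂Q := by
        refine Finset.sum_congr rfl fun k _ => ?_
        exact integral_finset_sum _ fun j _ => hprodint k j
    _ = ∑ k : Fin K, ∑ j : Fin K, (if k = j then ∫ a, u a ^ 2 ∂P else 0) := by
        refine Finset.sum_congr rfl fun k _ => Finset.sum_congr rfl fun j _ => key k j
    _ = K * ∫ a, u a ^ 2 ∂P := by
        simp [Finset.sum_ite_eq, Finset.card_univ, mul_comm]

set_option maxHeartbeats 1600000 in
/-- Existence of a one-hidden-layer Fourier neural network with generalization error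
at most `‖f̂‖²_{L¹}/K`: if `f(x) = ∫ f̂(ω) e^{iω·x} dω` with `f̂ ∈ L¹`, `‖f̂‖_{L¹} > 0`,
and `μ` is a probability measure on `ℝ^d`, then for every `K ≥ 1` there exist
frequencies `ω k` and amplitudes `c k` with
`∫ |f x - Re ∑ k, c k e^{i ω k · x}|² dμ(x) ≤ (∫ |f̂|)² / K`. -/
theorem shallow_network_approximation
    (d : ℕ) (μ : Measure (Fin d → ℝ)) [IsProbabilityMeasure μ]
    (f : (Fin d → ℝ) → ℝ) (fhat : (Fin d → ℝ) → ℂ)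
    (hfhatint : Integrable fhat volume)
    (hf : ∀ x : Fin d → ℝ, (f x : ℂ)
      = ∫ y : Fin d → ℝ, fhat y * Complex.exp (Complex.I * ((∑ i, y i * x i : ℝ) : ℂ)))
    (hpos : 0 < ∫ y, ‖fhat y‖)
    (K : ℕ) (hK : 1 ≤ K) :
    ∃ (ω : Fin K → (Fin d → ℝ)) (c : Fin K → ℂ),
      ∫ x, (f x - (∑ k, c k
          * Complex.exp (Complex.I * ((∑ i, ω k i * x i : ℝ) : ℂ))).re) ^ 2 ∂μ
        ≤ (∫ y, ‖fhat y‖) ^ 2 / K := by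
  classical
  obtain ⟨F, hFsm, hFae⟩ : ∃ F, StronglyMeasurable F ∧ fhat =ᵐ[volume] F :=
    ⟨hfhatint.1.mk fhat, hfhatint.1.stronglyMeasurable_mk, hfhatint.1.ae_eq_mk⟩
  have hFmeas : Measurable F := hFsm.measurable
  set T : ℝ := ∫ y, ‖fhat y‖ with hT
  have hT0 : 0 < T := hpos
  have hKpos : (0:ℝ) < (K:ℝ) := by exact_mod_cast Nat.lt_of_lt_of_le Nat.zero_lt_one hK
  -- the exponential
  set e : (Fin d → ℝ) → (Fin d → ℝ) → ℂ :=
    fun ω x => Complex.exp (Complex.I * ((∑ i, ω i * x i : ℝ) : ℂ)) with he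
  have hsum_meas : Measurable fun p : (Fin d → ℝ) × (Fin d → ℝ) => (∑ i, p.1 i * p.2 i : ℝ) :=
    Finset.measurable_sum _ fun i _ =>
      ((measurable_pi_apply i).comp measurable_fst).mul ((measurable_pi_apply i).comp measurable_snd)
  have he_meas : Measurable fun p : (Fin d → ℝ) × (Fin d → ℝ) => e p.1 p.2 :=
    Complex.measurable_exp.comp ((Complex.measurable_ofReal.comp hsum_meas).const_mul Complex.I)
  have he_abs : ∀ ω x, ‖e ω x‖ = 1 := by
    intro ω x
    rw [he]
    simp only [Complex.norm_exp]
    simp [Complex.mul_re]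
  -- |F| facts
  have habs_ae : (fun y => ‖fhat y‖) =ᵐ[volume] fun y => ‖F y‖ :=
    hFae.mono fun y hy => by simp only [hy]
  have habs_int : Integrable (fun y => ‖fhat y‖) volume := by
    simpa using hfhatint.norm
  have hFabs_int : Integrable (fun y => ‖F y‖) volume := habs_int.congr habs_ae
  have hTF : ∫ y, ‖F y‖ = T := (integral_congr_ae habs_ae).symm
  -- the sampling density and measure
  set ρ : (Fin d → ℝ) → NNReal := fun ω => Real.toNNReal (‖F ω‖ / T) with hρ
  have hFabs_meas : Measurable fun ω => ‖F ω‖ := by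
    simpa using hFmeas.norm
  have hρmeas : Measurable ρ :=
    measurable_real_toNNReal.comp (hFabs_meas.div_const T)
  set P : Measure (Fin d → ℝ) := volume.withDensity (fun ω => (ρ ω : ENNReal)) with hP
  have hρint : Integrable (fun ω => ‖F ω‖ / T) volume := hFabs_int.div_const T
  have hPprob : IsProbabilityMeasure P := by
    constructor
    rw [hP, withDensity_apply _ MeasurableSet.univ, Measure.restrict_univ]
    have h1 : ∫⁻ ω, ((ρ ω : ENNReal)) ∂volume
        = ENNReal.ofReal (∫ ω, ‖F ω‖ / T ∂volume) := by
      rw [ofReal_integral_eq_lintegral_ofReal hρint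
        (Filter.Eventually.of_forall fun ω => by positivity)]
      rfl
    rw [h1, integral_div, hTF, div_self hT0.ne', ENNReal.ofReal_one]
  -- the phase
  set φ : (Fin d → ℝ) → ℂ := fun ω => F ω / ((‖F ω‖ : ℝ) : ℂ) with hφ
  have hφmeas : Measurable φ :=
    hFmeas.div (Complex.measurable_ofReal.comp hFabs_meas)
  have hφle : ∀ ω, ‖φ ω‖ ≤ 1 := by
    intro ω
    by_cases h : F ω = 0
    · simp [hφ, h]
    · have habs0 : ‖F ω‖ ≠ 0 := by simpa using h
      rw [hφ]
      simp only [norm_div, Complex.norm_real, norm_norm]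
      rw [div_self habs0]
  -- the feature function
  set g : (Fin d → ℝ) → (Fin d → ℝ) → ℝ := fun ω x => T * (φ ω * e ω x).re with hg
  have hgmeas : Measurable fun p : (Fin d → ℝ) × (Fin d → ℝ) => g p.1 p.2 := by
    apply Measurable.const_mul
    exact Complex.measurable_re.comp ((hφmeas.comp measurable_fst).mul he_meas)
  have hgbound : ∀ ω x, |g ω x| ≤ T := by
    intro ω x
    rw [hg]
    simp only [abs_mul, abs_of_pos hT0]
    have h1 : |(φ ω * e ω x).re| ≤ 1 := by
      refine le_trans (Complex.abs_re_le_norm _) ?_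
      rw [norm_mul, he_abs, mul_one]
      exact hφle ω
    calc T * |(φ ω * e ω x).re| ≤ T * 1 := by
          exact mul_le_mul_of_nonneg_left h1 hT0.le
      _ = T := mul_one T
  -- integrability of integrand in hf
  have hexp_int : ∀ x, Integrable (fun y => fhat y * e y x) volume := by
    intro x
    refine Integrable.mono' habs_int ?_ (Filter.Eventually.of_forall fun y => ?_)
    · exact hfhatint.1.mul
        ((he_meas.comp (measurable_id.prodMk measurable_const)).aestronglyMeasurable)
    · rw [norm_mul]
      simp only [he_abs, mul_one, le_refl]
  -- mean identity
  have hmean : ∀ x, ∫ ω, g ω x ∂P = f x := by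
    intro x
    rw [hP, integral_withDensity_eq_integral_smul hρmeas]
    have hptw : ∀ ω, ρ ω • g ω x = (F ω * e ω x).re := by
      intro ω
      rw [NNReal.smul_def, hρ]
      simp only [Real.coe_toNNReal _ (by positivity : (0:ℝ) ≤ ‖F ω‖ / T)]
      by_cases h : F ω = 0
      · simp [hg, hφ, h]
      · have habs0 : (‖F ω‖ : ℝ) ≠ 0 := by simpa using h
        rw [hg]
        simp only [smul_eq_mul]
        rw [show ‖F ω‖ / T * (T * (φ ω * e ω x).re)
            = ‖F ω‖ * (φ ω * e ω x).re by field_simp]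
        rw [← Complex.re_ofReal_mul]
        congr 1
        rw [hφ]
        simp only
        have hne : ((‖F ω‖ : ℝ) : ℂ) ≠ 0 := Complex.ofReal_ne_zero.mpr habs0
        field_simp
    rw [show (fun ω => ρ ω • g ω x) = fun ω => (F ω * e ω x).re from funext hptw]
    have hae2 : (fun ω => (F ω * e ω x).re) =ᵐ[volume] fun ω => (fhat ω * e ω x).re :=
      hFae.mono fun ω h => by simp only [h]
    rw [integral_congr_ae hae2]
    have := integral_re (hexp_int x)
    simp only [RCLike.re_to_complex] at this
    rw [this, ← hf x, Complex.ofReal_re]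
  -- measurability of f
  have hf_eqF : ∀ x, f x = (∫ y, F y * e y x ∂volume).re := by
    intro x
    have h1 : (f x : ℂ) = ∫ y, F y * e y x ∂volume := by
      rw [hf x]
      exact integral_congr_ae (hFae.mono fun y h => by simp only [h]; rfl)
    rw [← h1, Complex.ofReal_re]
  have hfmeas : Measurable f := by
    rw [show f = fun x => (∫ y, F y * e y x ∂volume).re from funext hf_eqF]
    apply Complex.measurable_re.comp
    have hsm : StronglyMeasurable fun p : (Fin d → ℝ) × (Fin d → ℝ) => F p.2 * e p.2 p.1 :=
      ((hFmeas.comp measurable_snd).mul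
        (he_meas.comp (measurable_snd.prodMk measurable_fst))).stronglyMeasurable
    exact hsm.integral_prod_right'.measurable
  have hfbound : ∀ x, |f x| ≤ T := by
    intro x
    have h1 : f x = (∫ y, fhat y * e y x ∂volume).re := by
      rw [← hf x, Complex.ofReal_re]
    rw [h1]
    refine le_trans (Complex.abs_re_le_norm _) ?_
    refine le_trans (norm_integral_le_integral_norm _) ?_
    rw [hT]
    refine le_of_eq (integral_congr_ae (Filter.Eventually.of_forall fun y => ?_))
    simp only [norm_mul, he_abs, mul_one]
  -- integrability under P of g and related functions
  have hgx_meas : ∀ x, Measurable fun ω => g ω x := fun x =>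
    hgmeas.comp (measurable_id.prodMk measurable_const)
  have hu_int : ∀ x, Integrable (fun ω => g ω x - f x) P := by
    intro x
    refine Integrable.mono' (integrable_const (T + |f x|))
      ((hgx_meas x).sub measurable_const).aestronglyMeasurable
      (Filter.Eventually.of_forall fun ω => ?_)
    calc ‖g ω x - f x‖ ≤ |g ω x| + |f x| := abs_sub _ _
      _ ≤ T + |f x| := add_le_add_left (hgbound ω x) _
  have hu2_int : ∀ x, Integrable (fun ω => (g ω x - f x) ^ 2) P := by
    intro x
    refine Integrable.mono' (integrable_const ((T + |f x|) ^ 2))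
      (((hgx_meas x).sub measurable_const).pow_const 2).aestronglyMeasurable
      (Filter.Eventually.of_forall fun ω => ?_)
    rw [Real.norm_eq_abs, abs_of_nonneg (sq_nonneg _)]
    have hb : |g ω x - f x| ≤ T + |f x| :=
      (abs_sub _ _).trans (add_le_add_left (hgbound ω x) _)
    exact sq_le_sq' (abs_le.mp hb).1 (abs_le.mp hb).2
  have hgx_int : ∀ x, Integrable (fun ω => g ω x) P := by
    intro x
    refine Integrable.mono' (integrable_const T) (hgx_meas x).aestronglyMeasurable
      (Filter.Eventually.of_forall fun ω => ?_)
    exact hgbound ω x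
  have hgx2_int : ∀ x, Integrable (fun ω => g ω x ^ 2) P := by
    intro x
    refine Integrable.mono' (integrable_const (T ^ 2))
      ((hgx_meas x).pow_const 2).aestronglyMeasurable
      (Filter.Eventually.of_forall fun ω => ?_)
    rw [Real.norm_eq_abs, abs_of_nonneg (sq_nonneg _)]
    exact sq_le_sq' (abs_le.mp (hgbound ω x)).1 (abs_le.mp (hgbound ω x)).2
  have hu_mean : ∀ x, ∫ ω, (g ω x - f x) ∂P = 0 := by
    intro x
    rw [integral_sub (hgx_int x) (integrable_const (f x)), hmean x, integral_const]
    simp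
  have hvar : ∀ x, ∫ ω, (g ω x - f x) ^ 2 ∂P ≤ T ^ 2 := by
    intro x
    have hexpand : ∀ ω, (g ω x - f x) ^ 2 = g ω x ^ 2 - 2 * f x * g ω x + f x ^ 2 := by
      intro ω; ring
    rw [show (fun ω => (g ω x - f x) ^ 2)
        = fun ω => g ω x ^ 2 - 2 * f x * g ω x + f x ^ 2 from funext hexpand]
    have hmul : Integrable (fun ω => 2 * f x * g ω x) P := (hgx_int x).const_mul _
    have hadd : Integrable (fun ω => g ω x ^ 2 - 2 * f x * g ω x) P := (hgx2_int x).sub hmul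
    rw [integral_add hadd (integrable_const _), integral_sub (hgx2_int x) hmul,
      integral_const_mul, hmean x, integral_const]
    have h2 : ∫ ω, g ω x ^ 2 ∂P ≤ T ^ 2 := by
      calc ∫ ω, g ω x ^ 2 ∂P ≤ ∫ _, T ^ 2 ∂P := by
            refine integral_mono (hgx2_int x) (integrable_const _) fun ω => ?_
            exact sq_le_sq' (abs_le.mp (hgbound ω x)).1 (abs_le.mp (hgbound ω x)).2
        _ = T ^ 2 := by simp
    have h3 : (0:ℝ) ≤ f x ^ 2 := sq_nonneg _
    simp only [measure_univ, ENNReal.toReal_one, smul_eq_mul, one_mul, probReal_univ]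
    nlinarith
  -- the product measure
  set Q : Measure (Fin K → (Fin d → ℝ)) := Measure.pi (fun _ => P) with hQ
  have hQprob : IsProbabilityMeasure Q := by rw [hQ]; infer_instance
  -- variance of the empirical mean, for fixed x
  have hC : ∀ x, ∫ W : Fin K → (Fin d → ℝ), (∑ k, (g (W k) x - f x)) ^ 2 ∂Q
      = K * ∫ ω, (g ω x - f x) ^ 2 ∂P := fun x =>
    aux_pi_sum_sq P (fun ω => g ω x - f x) (hu_int x) (hu2_int x) (hu_mean x)
  -- the joint error function
  set H : (Fin K → (Fin d → ℝ)) × (Fin d → ℝ) → ℝ :=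
    fun p => (∑ k, (g (p.1 k) p.2 - f p.2)) ^ 2 / (K:ℝ) ^ 2 with hH
  have hHmeas : Measurable H := by
    apply Measurable.div_const
    apply Measurable.pow_const
    apply Finset.measurable_sum
    intro k _
    have h2 : Measurable fun p : (Fin K → (Fin d → ℝ)) × (Fin d → ℝ) =>
        ((p.1 k, p.2) : (Fin d → ℝ) × (Fin d → ℝ)) :=
      ((measurable_pi_apply k).comp measurable_fst).prodMk measurable_snd
    exact (hgmeas.comp h2).sub (hfmeas.comp measurable_snd)
  have hHbound : ∀ p, |H p| ≤ ((K:ℝ) * (2 * T)) ^ 2 := by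
    intro p
    have hS : |∑ k, (g (p.1 k) p.2 - f p.2)| ≤ (K:ℝ) * (2 * T) := by
      refine le_trans (Finset.abs_sum_le_sum_abs _ _) ?_
      calc ∑ k : Fin K, |g (p.1 k) p.2 - f p.2| ≤ ∑ _k : Fin K, 2 * T := by
            refine Finset.sum_le_sum fun k _ => ?_
            calc |g (p.1 k) p.2 - f p.2| ≤ |g (p.1 k) p.2| + |f p.2| := abs_sub _ _
              _ ≤ T + T := add_le_add (hgbound _ _) (hfbound _)
              _ = 2 * T := by ring
        _ = (K:ℝ) * (2 * T) := by simp [Finset.sum_const, Finset.card_univ, nsmul_eq_mul]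
    have hK2 : (1:ℝ) ≤ (K:ℝ) ^ 2 := by
      have : (1:ℝ) ≤ (K:ℝ) := by exact_mod_cast hK
      nlinarith
    rw [hH]
    simp only [abs_div, abs_of_nonneg (sq_nonneg (∑ k, (g (p.1 k) p.2 - f p.2))),
      abs_of_nonneg (sq_nonneg ((K:ℝ)))]
    calc (∑ k, (g (p.1 k) p.2 - f p.2)) ^ 2 / (K:ℝ) ^ 2
        ≤ (∑ k, (g (p.1 k) p.2 - f p.2)) ^ 2 := div_le_self (sq_nonneg _) hK2
      _ ≤ ((K:ℝ) * (2 * T)) ^ 2 := sq_le_sq' (abs_le.mp hS).1 (abs_le.mp hS).2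
  -- integrability of H on the product
  have hHint : Integrable H (Q.prod μ) := by
    refine Integrable.mono' (integrable_const (((K:ℝ) * (2 * T)) ^ 2))
      hHmeas.aestronglyMeasurable (Filter.Eventually.of_forall fun p => hHbound p)
  -- swap the integrals
  have hswap : ∫ W, (∫ x, H (W, x) ∂μ) ∂Q = ∫ x, (∫ W, H (W, x) ∂Q) ∂μ :=
    integral_integral_swap hHint
  -- the inner Q-integral is small
  have hinner : ∀ x, ∫ W, H (W, x) ∂Q ≤ T ^ 2 / K := by
    intro x
    have h1 : ∫ W, H (W, x) ∂Q
        = (∫ W : Fin K → (Fin d → ℝ), (∑ k, (g (W k) x - f x)) ^ 2 ∂Q) / (K:ℝ) ^ 2 := by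
      rw [hH]
      exact integral_div _ _
    rw [h1, hC x]
    rw [div_le_div_iff₀ (by positivity) hKpos]
    have h2 := hvar x
    have hKK : (K:ℝ) * ((K:ℝ) * (T ^ 2 / K)) = (K:ℝ) * T ^ 2 := by
      field_simp
    nlinarith [hvar x, sq_nonneg (K:ℝ)]
  -- the expected error is small
  have hEbound : ∫ W, (∫ x, H (W, x) ∂μ) ∂Q ≤ T ^ 2 / K := by
    rw [hswap]
    have hint_inner : Integrable (fun x => ∫ W, H (W, x) ∂Q) μ := hHint.integral_prod_right
    calc ∫ x, (∫ W, H (W, x) ∂Q) ∂μ ≤ ∫ _, T ^ 2 / K ∂μ :=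
          integral_mono hint_inner (integrable_const _) hinner
      _ = T ^ 2 / K := by simp
  -- pick a good W
  have hEint : Integrable (fun W => ∫ x, H (W, x) ∂μ) Q := hHint.integral_prod_left
  obtain ⟨W, hW⟩ := exists_le_integral hEint
  refine ⟨W, fun k => ((T / K : ℝ) : ℂ) * φ (W k), ?_⟩
  have hfinal : ∀ x, (f x - (∑ k, ((T / K : ℝ) : ℂ) * φ (W k)
      * Complex.exp (Complex.I * ((∑ i, W k i * x i : ℝ) : ℂ))).re) ^ 2 = H (W, x) := by
    intro x
    have h2 : (∑ k, ((T / K : ℝ) : ℂ) * φ (W k)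
        * Complex.exp (Complex.I * ((∑ i, W k i * x i : ℝ) : ℂ))).re
        = (∑ k, g (W k) x) / K := by
      rw [Complex.re_sum, Finset.sum_div]
      refine Finset.sum_congr rfl fun k _ => ?_
      rw [mul_assoc, Complex.re_ofReal_mul, hg]
      show T / K * (φ (W k) * e (W k) x).re = T * (φ (W k) * e (W k) x).re / K
      ring
    rw [h2]
    have h3 : f x - (∑ k, g (W k) x) / K = -((∑ k, (g (W k) x - f x)) / K) := by
      rw [Finset.sum_sub_distrib, Finset.sum_const, Finset.card_univ, Fintype.card_fin,
        nsmul_eq_mul]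
      field_simp
      ring
    rw [h3, neg_sq, div_pow, hH]
  calc ∫ x, (f x - (∑ k, ((T / K : ℝ) : ℂ) * φ (W k)
          * Complex.exp (Complex.I * ((∑ i, W k i * x i : ℝ) : ℂ))).re) ^ 2 ∂μ
      = ∫ x, H (W, x) ∂μ := integral_congr_ae (Filter.Eventually.of_forall fun x => hfinal x)
    _ ≤ ∫ W, (∫ x, H (W, x) ∂μ) ∂Q := hW
    _ ≤ T ^ 2 / K := hEbound
end

section
/- Let A and B be constants with 0 < B ≤ A. Then the infimum over all measurable functions γ : [0,1] → [0,1] of the (possibly infinite) integral ∫_0^1 ( A γ(t) + B (1 − γ(t))/t ) dt equals B ( 1 + log(A/B) ), and it is attained by the bang-bang control γ(t) = 1_{[0, B/A]}(t). -/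
open MeasureTheory

/-- Integral of the pointwise minimum. -/
lemma min_lintegral_eq (A B : ℝ) (hB : 0 < B) (hBA : B ≤ A) :
    ∫⁻ t in Set.Ioc (0:ℝ) 1, ENNReal.ofReal (min A (B / t))
      = ENNReal.ofReal (B * (1 + Real.log (A / B))) := by
  have hA : 0 < A := hB.trans_le hBA
  set c : ℝ := B / A with hc
  have hc0 : 0 < c := div_pos hB hA
  have hc1 : c ≤ 1 := (div_le_one hA).mpr hBA
  have hsplit : Set.Ioc (0:ℝ) 1 = Set.Ioc 0 c ∪ Set.Ioc c 1 :=
    (Set.Ioc_union_Ioc_eq_Ioc hc0.le hc1).symm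
  rw [hsplit, lintegral_union measurableSet_Ioc (Set.Ioc_disjoint_Ioc_of_le le_rfl)]
  have h1 : ∫⁻ t in Set.Ioc (0:ℝ) c, ENNReal.ofReal (min A (B / t))
      = ENNReal.ofReal B := by
    have e1 : ∫⁻ t in Set.Ioc (0:ℝ) c, ENNReal.ofReal (min A (B / t))
        = ∫⁻ _ in Set.Ioc (0:ℝ) c, ENNReal.ofReal A := by
      apply setLIntegral_congr_fun_ae measurableSet_Ioc
      refine ae_of_all _ (fun t ht => ?_)
      have ht0 : (0:ℝ) < t := ht.1
      have : A ≤ B / t := (le_div_iff₀ ht0).mpr (by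
        have := ht.2
        calc A * t ≤ A * c := by nlinarith
          _ = B := by rw [hc]; field_simp)
      simp [min_eq_left this]
    rw [e1, setLIntegral_const, Real.volume_Ioc]
    rw [← ENNReal.ofReal_mul hA.le]
    congr 1
    rw [hc, sub_zero]; field_simp
  have h2 : ∫⁻ t in Set.Ioc c 1, ENNReal.ofReal (min A (B / t))
      = ENNReal.ofReal (B * Real.log (A / B)) := by
    have hcong : ∫⁻ t in Set.Ioc c 1, ENNReal.ofReal (min A (B / t))
        = ∫⁻ t in Set.Ioc c 1, ENNReal.ofReal (B / t) := by
      apply setLIntegral_congr_fun_ae measurableSet_Ioc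
      refine ae_of_all _ (fun t ht => ?_)
      have ht0 : (0:ℝ) < t := hc0.trans ht.1
      have : B / t ≤ A := (div_le_iff₀ ht0).mpr (by
        have := ht.1
        calc B = A * c := by rw [hc]; field_simp
          _ ≤ A * t := by nlinarith)
      simp [min_eq_right this]
    rw [hcong]
    have hint : IntegrableOn (fun t : ℝ => B / t) (Set.Ioc c 1) := by
      apply (ContinuousOn.integrableOn_Icc ?_).mono_set Set.Ioc_subset_Icc_self
      exact continuousOn_const.div continuousOn_id
        (fun x hx => ne_of_gt (hc0.trans_le hx.1))
    rw [← ofReal_integral_eq_lintegral_ofReal hint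
      ((ae_restrict_iff' measurableSet_Ioc).2 (ae_of_all _ (fun t ht => by
        have ht0 : (0:ℝ) < t := hc0.trans ht.1
        positivity)))]
    congr 1
    have : ∫ t in Set.Ioc c 1, B / t = ∫ t in c..1, B / t := by
      rw [intervalIntegral.integral_of_le hc1]
    rw [this]
    have : ∫ t in c..1, B / t = B * ∫ t in c..1, 1 / t := by
      rw [← intervalIntegral.integral_const_mul]
      congr 1; ext t; ring
    rw [this, integral_one_div (by
      intro h
      rw [Set.mem_uIcc] at h
      rcases h with ⟨h1, _⟩ | ⟨_, h2⟩
      · exact absurd h1 (not_le.mpr hc0)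
      · linarith)]
    rw [one_div_div]
  rw [h1, h2, ← ENNReal.ofReal_add hB.le
    (mul_nonneg hB.le (Real.log_nonneg ((one_le_div hB).mpr hBA)))]
  congr 1; ring

/-- The bang-bang control achieves the pointwise minimum. -/
lemma bang_bang_eq_min (A B : ℝ) (hB : 0 < B) (hBA : B ≤ A) (t : ℝ)
    (ht : t ∈ Set.Ioc (0:ℝ) 1) :
    A * Set.indicator (Set.Icc (0:ℝ) (B / A)) (fun _ => (1:ℝ)) t
      + B * (1 - Set.indicator (Set.Icc (0:ℝ) (B / A)) (fun _ => (1:ℝ)) t) / t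
      = min A (B / t) := by
  have hA : 0 < A := hB.trans_le hBA
  have ht0 : (0:ℝ) < t := ht.1
  rcases le_or_gt t (B / A) with h | h
  · rw [Set.indicator_of_mem (Set.mem_Icc.mpr ⟨ht0.le, h⟩)]
    have hmin : A ≤ B / t := (le_div_iff₀ ht0).mpr (by
      calc A * t ≤ A * (B / A) := by nlinarith
        _ = B := by field_simp)
    simp [min_eq_left hmin]
  · rw [Set.indicator_of_notMem (fun hmem => absurd hmem.2 (not_le.mpr h))]
    have hmin : B / t ≤ A := (div_le_iff₀ ht0).mpr (by
      calc B = A * (B / A) := by field_simp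
        _ ≤ A * t := by nlinarith)
    simp [min_eq_right hmin]

/-- Optimal bang-bang control for the time-dependent feature densities: for
`0 < B ≤ A`, the infimum over measurable `γ : [0,1] → [0,1]` of the (possibly
infinite) integral `∫_0^1 (A γ(t) + B (1 - γ(t))/t) dt` equals `B (1 + log (A/B))`,
and it is attained by the bang-bang control `γ = 1_{[0, B/A]}`. -/
theorem bang_bang_optimal_control (A B : ℝ) (hB : 0 < B) (hBA : B ≤ A) :
    (⨅ γ : {γ : ℝ → ℝ // Measurable γ ∧ ∀ t ∈ Set.Icc (0:ℝ) 1, γ t ∈ Set.Icc (0:ℝ) 1},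
        ∫⁻ t in Set.Ioc (0:ℝ) 1, ENNReal.ofReal (A * γ.1 t + B * (1 - γ.1 t) / t))
      = ENNReal.ofReal (B * (1 + Real.log (A / B)))
    ∧ ∫⁻ t in Set.Ioc (0:ℝ) 1,
        ENNReal.ofReal (A * Set.indicator (Set.Icc (0:ℝ) (B / A)) (fun _ => (1:ℝ)) t
          + B * (1 - Set.indicator (Set.Icc (0:ℝ) (B / A)) (fun _ => (1:ℝ)) t) / t)
      = ENNReal.ofReal (B * (1 + Real.log (A / B))) := by
  have hA : 0 < A := hB.trans_le hBA
  have hattain : ∫⁻ t in Set.Ioc (0:ℝ) 1,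
      ENNReal.ofReal (A * Set.indicator (Set.Icc (0:ℝ) (B / A)) (fun _ => (1:ℝ)) t
        + B * (1 - Set.indicator (Set.Icc (0:ℝ) (B / A)) (fun _ => (1:ℝ)) t) / t)
      = ENNReal.ofReal (B * (1 + Real.log (A / B))) := by
    rw [setLIntegral_congr_fun_ae measurableSet_Ioc
      (ae_of_all _ (fun t ht => by rw [bang_bang_eq_min A B hB hBA t ht]))]
    exact min_lintegral_eq A B hB hBA
  refine ⟨le_antisymm ?_ ?_, hattain⟩
  · have hmem : ∀ t ∈ Set.Icc (0:ℝ) 1,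
        Set.indicator (Set.Icc (0:ℝ) (B / A)) (fun _ => (1:ℝ)) t ∈ Set.Icc (0:ℝ) 1 := by
      intro t _
      by_cases h : t ∈ Set.Icc (0:ℝ) (B / A)
      · simp [Set.indicator_of_mem h]
      · simp [Set.indicator_of_notMem h]
    exact iInf_le_of_le ⟨Set.indicator (Set.Icc (0:ℝ) (B / A)) (fun _ => (1:ℝ)),
      measurable_const.indicator measurableSet_Icc, hmem⟩ hattain.le
  · refine le_iInf (fun γ => ?_)
    rw [← min_lintegral_eq A B hB hBA]
    apply lintegral_mono_ae
    rw [ae_restrict_iff' measurableSet_Ioc]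
    refine ae_of_all _ (fun t ht => ?_)
    apply ENNReal.ofReal_le_ofReal
    have ht0 : (0:ℝ) < t := ht.1
    have hγ := γ.2.2 t ⟨ht.1.le, ht.2⟩
    have hγ0 : 0 ≤ γ.1 t := hγ.1
    have hγ1 : γ.1 t ≤ 1 := hγ.2
    have key : A * γ.1 t + B * (1 - γ.1 t) / t
        = A * γ.1 t + (B / t) * (1 - γ.1 t) := by ring
    rw [key]
    have h1 : min A (B / t) ≤ A := min_le_left _ _
    have h2 : min A (B / t) ≤ B / t := min_le_right _ _
    nlinarith [mul_le_mul_of_nonneg_right h1 hγ0,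
      mul_le_mul_of_nonneg_right h2 (by linarith : 0 ≤ 1 - γ.1 t)]
end
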